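/- arXiv:2003.00488 — 2 statements merged into one kernel-verified Lean document; each statement's English description precedes it below -/
import Mathlib

section
/- Let t be a rooted tree with pairwise distinct leaf labels and S a set of labels. If a vertex u of t is complete with respect to S (counter_S(u) = |L(u)|), then every vertex v in the subtree rooted at u is complete with respect to S, i.e., counter_S(v) = |L(v)| for all descendants v of u. -/
inductive RTree (α : Type*) where
  | leaf (a : α)
  | node (children : List (RTree α))

namespace RTree

variable {α : Type*} [DecidableEq α]

/-- The list of leaf labels of a tree. -/
def leafList : RTree α → List α
  | leaf a => [a]
  | node cs => (cs.attach.map fun ⟨w, _⟩ => leafList w).flatten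
decreasing_by have := List.sizeOf_lt_of_mem ‹_›; simp only [node.sizeOf_spec]; omega

/-- `L v` is the finite set of labels of leaves in the subtree rooted at `v`. -/
def L (v : RTree α) : Finset α := (leafList v).toFinset

/-- The counter function. -/
def counter (S : Finset α) : RTree α → ℕ
  | leaf a => if a ∈ S then 1 else 0
  | node cs =>
      (cs.attach.map fun ⟨w, _⟩ =>
        if counter S w = (L w).card then counter S w else 0).sum
decreasing_by have := List.sizeOf_lt_of_mem ‹_›; simp only [node.sizeOf_spec]; omega

/-- `IsVertex v t` means that `v` is a vertex (subtree) of `t`. -/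
inductive IsVertex : RTree α → RTree α → Prop
  | refl (t : RTree α) : IsVertex t t
  | child {v w : RTree α} {cs : List (RTree α)} : w ∈ cs → IsVertex v w → IsVertex v (node cs)

/-- The list of all vertices (subtrees) of a tree. -/
def vertexList : RTree α → List (RTree α)
  | leaf a => [leaf a]
  | node cs => node cs :: (cs.attach.map fun ⟨w, _⟩ => vertexList w).flatten
decreasing_by have := List.sizeOf_lt_of_mem ‹_›; simp only [node.sizeOf_spec]; omega

/-- Auxiliary: pointwise `≤` plus equal sums forces pointwise equality. -/
theorem list_sum_eq_of_le {β : Type*} (l : List β) (f g : β → ℕ)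
    (hle : ∀ x ∈ l, f x ≤ g x) (hs : (l.map f).sum = (l.map g).sum) :
    ∀ x ∈ l, f x = g x := by
  induction l with
  | nil => simp
  | cons a l ih =>
    simp only [List.map_cons, List.sum_cons] at hs
    have h1 : f a ≤ g a := hle a List.mem_cons_self
    have h2 : (l.map f).sum ≤ (l.map g).sum :=
      List.sum_le_sum (fun x hx => hle x (List.mem_cons_of_mem _ hx))
    intro x hx
    rcases List.mem_cons.mp hx with rfl | hx
    · omega
    · exact ih (fun y hy => hle y (List.mem_cons_of_mem _ hy)) (by omega) x hx

/-- A tree with no leaves has counter zero. -/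
theorem counter_of_nil (S : Finset α) : ∀ w : RTree α, w.leafList = [] → counter S w = 0
  | leaf a, h => by simp [leafList] at h
  | node cs, h => by
    rw [counter]
    apply List.sum_eq_zero
    intro x hx
    simp only [List.mem_map, List.mem_attach, true_and, Subtype.exists] at hx
    obtain ⟨w, hw, rfl⟩ := hx
    have hwl : w.leafList = [] := by
      rw [leafList] at h
      exact List.flatten_eq_nil_iff.mp h _
        (List.mem_map.mpr ⟨⟨w, hw⟩, List.mem_attach _ _, rfl⟩)
    have h0 := counter_of_nil S w hwl
    rw [h0]; split <;> rfl
decreasing_by have := List.sizeOf_lt_of_mem hw; simp only [node.sizeOf_spec]; omega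

/-- Children of a node with nodup leaf labels have nodup leaf labels. -/
theorem nodup_child {cs : List (RTree α)} (h : (node cs).leafList.Nodup) {w : RTree α}
    (hw : w ∈ cs) : w.leafList.Nodup := by
  rw [leafList] at h
  exact (List.nodup_flatten.mp h).1 _ (List.mem_map.mpr ⟨⟨w, hw⟩, List.mem_attach _ _, rfl⟩)

/-- If a node with nodup leaf labels is complete, so is each of its children. -/
theorem child_complete (S : Finset α) {cs : List (RTree α)}
    (hnd : (node cs).leafList.Nodup)
    (hc : counter S (node cs) = (L (node cs)).card) {w : RTree α} (hw : w ∈ cs) :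
    counter S w = (L w).card := by
  have hcard : (L (node cs)).card = (cs.attach.map fun x => x.1.leafList.length).sum := by
    rw [L, List.toFinset_card_of_nodup hnd]
    conv_lhs => rw [leafList]
    rw [List.length_flatten, List.map_map]
    rfl
  rw [counter, hcard] at hc
  have hle : ∀ x ∈ cs.attach,
      (fun (x : {x // x ∈ cs}) => if counter S x.1 = (L x.1).card then counter S x.1 else 0) x ≤
      (fun (x : {x // x ∈ cs}) => x.1.leafList.length) x := by
    rintro ⟨x, hx⟩ -
    dsimp only
    split
    · next h => rw [h]; exact List.toFinset_card_le _
    · exact Nat.zero_le _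
  have key := list_sum_eq_of_le cs.attach _ _ hle (by convert hc using 2) ⟨w, hw⟩
      (List.mem_attach _ _)
  dsimp only at key
  split at key
  · assumption
  · have hnil : w.leafList = [] := List.length_eq_zero_iff.mp key.symm
    rw [counter_of_nil S w hnil, L, hnil]
    simp

theorem nodup_vertex {v t : RTree α} (hv : IsVertex v t) (hnd : t.leafList.Nodup) :
    v.leafList.Nodup := by
  induction hv with
  | refl => exact hnd
  | child hmem _ ih => exact ih (nodup_child hnd hmem)

/-- if a vertex `u` is complete with respect to `S` then every vertex in the
subtree rooted at `u` is complete with respect to `S`. -/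
theorem complete_descendants (t : RTree α) (hnd : t.leafList.Nodup)
    (S : Finset α) (u : RTree α) (hu : IsVertex u t)
    (hc : counter S u = (L u).card) :
    ∀ v : RTree α, IsVertex v u → counter S v = (L v).card := by
  have hndu : u.leafList.Nodup := nodup_vertex hu hnd
  have key : ∀ v u : RTree α, IsVertex v u → u.leafList.Nodup →
      counter S u = (L u).card → counter S v = (L v).card := by
    intro v u hv
    induction hv with
    | refl => exact fun _ h => h
    | child hmem hsub ih =>
      intro hnd' hc'
      exact ih (nodup_child hnd' hmem) (child_complete S hnd' hc' hmem)
  exact fun v hv => key v u hv hndu hc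

end RTree
end

section
/- Let t be a rooted tree with pairwise distinct leaf labels, S a set of labels, and a a leaf label of t with a ∉ S. Then the set of vertices that are complete with respect to S ∪ {a} but not complete with respect to S is exactly { v : a ∈ L(v) and L(v) ⊆ S ∪ {a} }, and this set is totally ordered by the ancestor relation (it forms a chain of ancestors of the leaf labeled a, starting at that leaf). -/
namespace RTree

variable {α : Type*} [DecidableEq α]

theorem leafList_node (cs : List (RTree α)) :
    leafList (node cs) = (cs.map leafList).flatten := by
  rw [leafList]
  congr 1
  simp

theorem counter_node (S : Finset α) (cs : List (RTree α)) :
    counter S (node cs) =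
      (cs.map fun w => if counter S w = (L w).card then counter S w else 0).sum := by
  rw [counter]
  congr 1
  simp

theorem sublist_leafList {v t : RTree α} (h : IsVertex v t) :
    (leafList v).Sublist (leafList t) := by
  induction h with
  | refl => exact List.Sublist.refl _
  | child hc _ ih =>
      refine ih.trans ?_
      rw [leafList_node]
      exact List.sublist_flatten_of_mem (List.mem_map_of_mem (f := leafList) hc)

theorem nodup_of_isVertex {v t : RTree α} (h : IsVertex v t) (hnd : (leafList t).Nodup) :
    (leafList v).Nodup := (sublist_leafList h).nodup hnd

theorem leaf_isVertex : ∀ (t : RTree α) (a : α), a ∈ leafList t → IsVertex (leaf a) t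
  | leaf b, a, h => by
      simp only [leafList, List.mem_singleton] at h
      subst h; exact .refl _
  | node cs, a, h => by
      rw [leafList_node, List.mem_flatten] at h
      obtain ⟨l, hl, hal⟩ := h
      obtain ⟨c, hc, rfl⟩ := List.mem_map.mp hl
      exact .child hc (leaf_isVertex c a hal)
decreasing_by have := List.sizeOf_lt_of_mem hc; simp only [node.sizeOf_spec]; omega

theorem card_L_of_nodup {v : RTree α} (h : (leafList v).Nodup) :
    (L v).card = (leafList v).length := List.toFinset_card_of_nodup h

theorem sum_map_eq_iff {β : Type*} {l : List β} {f g : β → ℕ}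
    (h : ∀ c ∈ l, f c ≤ g c) :
    (l.map f).sum = (l.map g).sum ↔ ∀ c ∈ l, f c = g c := by
  induction l with
  | nil => simp
  | cons b l ih =>
      simp only [List.map_cons, List.sum_cons, List.mem_cons, forall_eq_or_imp]
      have hb := h b (List.mem_cons_self (a := b) (l := l))
      have hl : ∀ c ∈ l, f c ≤ g c := fun c hc => h c (List.mem_cons_of_mem _ hc)
      have hsum : (l.map f).sum ≤ (l.map g).sum := List.sum_le_sum hl
      rw [← ih hl]
      omega

theorem card_L_node {cs : List (RTree α)} (hnd : (leafList (node cs)).Nodup) :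
    (L (node cs)).card = (cs.map fun c => (L c).card).sum := by
  rw [card_L_of_nodup hnd, leafList_node, List.length_flatten, List.map_map]
  congr 1
  apply List.map_congr_left
  intro c hc
  have hndc : (leafList c).Nodup := by
    rw [leafList_node] at hnd
    exact (List.nodup_flatten.mp hnd).1 _ (List.mem_map_of_mem (f := leafList) hc)
  simp [Function.comp, card_L_of_nodup hndc]

theorem counter_le (S : Finset α) {v : RTree α} (hnd : (leafList v).Nodup) :
    counter S v ≤ (L v).card := by
  cases v with
  | leaf a => rw [counter]; simp [L, leafList]; split <;> simp
  | node cs =>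
      rw [counter_node, card_L_node hnd]
      apply List.sum_le_sum
      intro c _
      split
      · omega
      · exact Nat.zero_le _

theorem counter_eq_iff (S : Finset α) :
    ∀ (v : RTree α), (leafList v).Nodup →
      (counter S v = (L v).card ↔ ∀ x ∈ leafList v, x ∈ S)
  | leaf a, _ => by
      rw [counter]
      simp only [L, leafList, List.toFinset_cons, List.toFinset_nil]
      simp only [insert_empty_eq, Finset.card_singleton, List.mem_singleton,
        forall_eq]
      split <;> simp_all
  | node cs, hnd => by
      rw [counter_node, card_L_node hnd]
      have hnodup : ∀ c ∈ cs, (leafList c).Nodup := by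
        intro c hc
        exact nodup_of_isVertex (.child hc (.refl c)) hnd
      have hle : ∀ c ∈ cs,
          (if counter S c = (L c).card then counter S c else 0) ≤ (L c).card := by
        intro c _; split <;> omega
      rw [sum_map_eq_iff hle]
      have key : ∀ c ∈ cs,
          ((if counter S c = (L c).card then counter S c else 0) = (L c).card ↔
            ∀ x ∈ leafList c, x ∈ S) := by
        intro c hc
        rw [← counter_eq_iff S c (hnodup c hc)]
        constructor
        · intro h
          split at h
          · assumption
          · have := counter_le S (hnodup c hc)
            omega
        · intro h; simp [h]
      constructor
      · intro h x hx
        rw [leafList_node, List.mem_flatten] at hx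
        obtain ⟨l, hl, hxl⟩ := hx
        obtain ⟨c, hc, rfl⟩ := List.mem_map.mp hl
        exact (key c hc).mp (h c hc) x hxl
      · intro h c hc
        refine (key c hc).mpr fun x hx => h x ?_
        rw [leafList_node, List.mem_flatten]
        exact ⟨leafList c, List.mem_map_of_mem (f := leafList) hc, hx⟩
decreasing_by have := List.sizeOf_lt_of_mem hc; simp only [node.sizeOf_spec]; omega

theorem chain_lemma (a : α) :
    ∀ (t : RTree α), (leafList t).Nodup → ∀ v w : RTree α, IsVertex v t → IsVertex w t →
      a ∈ leafList v → a ∈ leafList w → IsVertex v w ∨ IsVertex w v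
  | leaf b, _, v, w, hv, hw, hav, haw => by
      cases hv; cases hw; exact Or.inl (.refl _)
  | node cs, hnd, v, w, hv, hw, hav, haw => by
      cases hv with
      | refl => exact Or.inr hw
      | @child c1 _ hc1 hv1 =>
        cases hw with
        | refl => exact Or.inl (.child hc1 hv1)
        | @child c2 _ hc2 hv2 =>
          have hac1 : a ∈ leafList c1 := (sublist_leafList hv1).subset hav
          have hac2 : a ∈ leafList c2 := (sublist_leafList hv2).subset haw
          have hceq : c1 = c2 := by
            have hpw : (cs.map leafList).Pairwise List.Disjoint := by
              rw [leafList_node] at hnd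
              exact (List.nodup_flatten.mp hnd).2
            rw [List.pairwise_iff_getElem] at hpw
            obtain ⟨i, hi, rfl⟩ := List.mem_iff_getElem.mp hc1
            obtain ⟨j, hj, rfl⟩ := List.mem_iff_getElem.mp hc2
            have hmi : i < (cs.map leafList).length := by simpa using hi
            have hmj : j < (cs.map leafList).length := by simpa using hj
            rcases lt_trichotomy i j with h | h | h
            · have := hpw i j hmi hmj h
              simp only [List.getElem_map] at this
              exact absurd (this hac1) (not_not.mpr hac2)
            · subst h; rfl
            · have := hpw j i hmj hmi h
              simp only [List.getElem_map] at this
              exact absurd (this hac2) (not_not.mpr hac1)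
          subst hceq
          have hndc : (leafList c1).Nodup :=
            nodup_of_isVertex (.child hc1 (.refl c1)) hnd
          exact chain_lemma a c1 hndc v w hv1 hv2 hav haw
decreasing_by have := List.sizeOf_lt_of_mem hc1; simp only [node.sizeOf_spec]; omega


/-- for a leaf label `a ∉ S`, the set of vertices complete w.r.t. `S ∪ {a}` but
not w.r.t. `S` is exactly `{v : a ∈ L(v) ∧ L(v) ⊆ S ∪ {a}}`; this set is totally ordered by
the ancestor relation, forming a chain of ancestors of the leaf labeled `a` starting at that
leaf. -/
theorem newly_complete_chain (t : RTree α) (hnd : t.leafList.Nodup)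
    (S : Finset α) (a : α) (ha : a ∈ leafList t) (haS : a ∉ S) :
    (∀ v : RTree α, IsVertex v t →
        ((counter (insert a S) v = (L v).card ∧ counter S v ≠ (L v).card) ↔
          (a ∈ L v ∧ L v ⊆ insert a S))) ∧
      (∀ v w : RTree α, IsVertex v t → IsVertex w t →
        (a ∈ L v ∧ L v ⊆ insert a S) → (a ∈ L w ∧ L w ⊆ insert a S) →
        IsVertex v w ∨ IsVertex w v) ∧
      (∀ v : RTree α, IsVertex v t → (a ∈ L v ∧ L v ⊆ insert a S) →
        IsVertex (leaf a) v) := by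
  refine ⟨?_, ?_, ?_⟩
  · intro v hv
    have hndv := nodup_of_isVertex hv hnd
    rw [counter_eq_iff (insert a S) v hndv, Ne, counter_eq_iff S v hndv]
    constructor
    · rintro ⟨h1, h2⟩
      push_neg at h2
      obtain ⟨x, hx, hxS⟩ := h2
      have hxa : x = a := by
        have := h1 x hx
        rw [Finset.mem_insert] at this
        tauto
      subst hxa
      exact ⟨List.mem_toFinset.mpr hx, fun y hy => h1 y (List.mem_toFinset.mp hy)⟩
    · rintro ⟨haLv, hsub⟩
      refine ⟨fun x hx => hsub (List.mem_toFinset.mpr hx), fun hall => ?_⟩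
      exact haS (hall a (List.mem_toFinset.mp haLv))
  · rintro v w hv hw ⟨hav, -⟩ ⟨haw, -⟩
    exact chain_lemma a t hnd v w hv hw (List.mem_toFinset.mp hav) (List.mem_toFinset.mp haw)
  · rintro v hv ⟨hav, -⟩
    exact leaf_isVertex v a (List.mem_toFinset.mp hav)


end RTree
end
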